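/- Let 0 < k₋ ≤ k⁺, let u : ℝ → ℂ be measurable, let A ∈ ℂ, τ, t ∈ ℝ with t ≠ τ, and C > 0, and assume |u(k) − A·exp(i k τ)| ≤ C/k for all k ∈ [k₋, k⁺]. Then |∫_{k₋}^{k⁺} u(k)·exp(−i k t) dk| ≤ 2|A|/|t − τ| + C·log(k⁺/k₋). -/

import Mathlib

open MeasureTheory

/-- Off-line case of Proposition 4.1 in dimension `n = 3`, in abstract form. -/
theorem stmt_11 (kminus kplus : ℝ) (hk : 0 < kminus) (hkk : kminus ≤ kplus)
    (u : ℝ → ℂ) (hu : Measurable u) (A : ℂ) (τ t C : ℝ) (ht : t ≠ τ) (hC : 0 < C)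
    (h : ∀ k ∈ Set.Icc kminus kplus, ‖u k - A * Complex.exp (Complex.I * k * τ)‖ ≤ C / k) :
    ‖∫ k in kminus..kplus, u k * Complex.exp (-(Complex.I * k * t))‖ ≤
      2 * ‖A‖ / |t - τ| + C * Real.log (kplus / kminus) := by
  have hc : (τ - t : ℝ) ≠ 0 := sub_ne_zero.mpr (Ne.symm ht)
  set c : ℂ := Complex.I * ((τ : ℂ) - t) with hcdef
  have hts : (τ : ℂ) ≠ (t : ℂ) := by exact_mod_cast Ne.symm ht
  have hcne : c ≠ 0 := mul_ne_zero Complex.I_ne_zero (sub_ne_zero.mpr hts)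
  set f1 : ℝ → ℂ := fun k => A * Complex.exp (c * k) with hf1
  set f2 : ℝ → ℂ := fun k => (u k - A * Complex.exp (Complex.I * k * τ)) *
      Complex.exp (-(Complex.I * k * t)) with hf2
  have hfun : ∀ k : ℝ, u k * Complex.exp (-(Complex.I * k * t)) = f1 k + f2 k := by
    intro k
    have : c * k = Complex.I * k * τ + (-(Complex.I * k * t)) := by
      simp [hcdef]; ring
    simp only [hf1, hf2, this, Complex.exp_add]
    ring
  have hi1 : IntervalIntegrable f1 volume kminus kplus := by
    apply Continuous.intervalIntegrable
    fun_prop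
  have hi2 : IntervalIntegrable f2 volume kminus kplus := by
    rw [intervalIntegrable_iff_integrableOn_Ioc_of_le hkk]
    apply MeasureTheory.Integrable.mono' (g := fun _ => C / kminus)
    · exact (integrableOn_const_iff).mpr (Or.inr measure_Ioc_lt_top)
    · apply Measurable.aestronglyMeasurable
      fun_prop
    · filter_upwards [ae_restrict_mem measurableSet_Ioc] with k hkmem
      have hk0 : 0 < k := lt_of_lt_of_le hk hkmem.1.le
      have h1 : ‖f2 k‖ = ‖u k - A * Complex.exp (Complex.I * k * τ)‖ := by
        rw [hf2]
        simp [norm_mul, Complex.norm_exp]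
      rw [h1]
      refine le_trans (h k ⟨hkmem.1.le, hkmem.2⟩) ?_
      gcongr
      exact hkmem.1.le
  have hsplit : (∫ k in kminus..kplus, u k * Complex.exp (-(Complex.I * k * t)))
      = (∫ k in kminus..kplus, f1 k) + ∫ k in kminus..kplus, f2 k := by
    rw [← intervalIntegral.integral_add hi1 hi2]
    exact intervalIntegral.integral_congr fun k _ => hfun k
  rw [hsplit]
  have hb1 : ‖∫ k in kminus..kplus, f1 k‖ ≤ 2 * ‖A‖ / |t - τ| := by
    have : (∫ k in kminus..kplus, f1 k)
        = A * ((Complex.exp (c * kplus) - Complex.exp (c * kminus)) / c) := by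
      rw [hf1, intervalIntegral.integral_const_mul, integral_exp_mul_complex hcne]
    rw [this]
    have hcn : ‖c‖ = |t - τ| := by
      rw [hcdef]
      rw [norm_mul, Complex.norm_I]
      rw [← Complex.ofReal_sub, Complex.norm_real, Real.norm_eq_abs, abs_sub_comm]
      ring
    have he : ∀ k : ℝ, ‖Complex.exp (c * k)‖ = 1 := by
      intro k
      rw [Complex.norm_exp]
      have : (c * k).re = 0 := by
        simp [hcdef, Complex.mul_re]
      rw [this, Real.exp_zero]
    rw [norm_mul, norm_div, hcn]
    have hX : ‖Complex.exp (c * kplus) - Complex.exp (c * kminus)‖ ≤ 2 := by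
      calc ‖Complex.exp (c * kplus) - Complex.exp (c * kminus)‖
          ≤ ‖Complex.exp (c * kplus)‖ + ‖Complex.exp (c * kminus)‖ := norm_sub_le _ _
        _ = 2 := by rw [he, he]; norm_num
    have hpos : (0 : ℝ) < |t - τ| := abs_pos.mpr (sub_ne_zero.mpr ht)
    rw [show (2 : ℝ) * ‖A‖ / |t - τ| = ‖A‖ * (2 / |t - τ|) by ring]
    gcongr
  have hb2 : ‖∫ k in kminus..kplus, f2 k‖ ≤ C * Real.log (kplus / kminus) := by
    have hg : IntervalIntegrable (fun k : ℝ => C / k) volume kminus kplus := by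
      apply ContinuousOn.intervalIntegrable
      apply ContinuousOn.div continuousOn_const continuousOn_id
      intro x hx
      rw [Set.uIcc_of_le hkk] at hx
      exact ne_of_gt (lt_of_lt_of_le hk hx.1)
    have hgv : (∫ k in kminus..kplus, C / k) = C * Real.log (kplus / kminus) := by
      have h0 : (0 : ℝ) ∉ Set.uIcc kminus kplus := by
        rw [Set.uIcc_of_le hkk]
        intro hmem
        exact absurd hmem.1 (not_le.mpr hk)
      have := integral_one_div h0
      calc (∫ k in kminus..kplus, C / k) = C * ∫ k in kminus..kplus, 1 / k := by
            rw [← intervalIntegral.integral_const_mul]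
            congr 1; funext k; ring
        _ = C * Real.log (kplus / kminus) := by rw [this]
    have hlog : 0 ≤ Real.log (kplus / kminus) :=
      Real.log_nonneg (by rw [le_div_iff₀ hk]; linarith)
    have hbnd : ‖∫ k in kminus..kplus, f2 k‖ ≤ |∫ k in kminus..kplus, C / k| := by
      apply intervalIntegral.norm_integral_le_abs_of_norm_le _ hg
      filter_upwards [ae_restrict_mem measurableSet_uIoc] with k hkmem
      rw [Set.uIoc_of_le hkk] at hkmem
      have hk0 : 0 < k := lt_of_lt_of_le hk hkmem.1.le
      have h1 : ‖f2 k‖ = ‖u k - A * Complex.exp (Complex.I * k * τ)‖ := by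
        rw [hf2]
        simp [norm_mul, Complex.norm_exp]
      rw [h1]
      exact h k ⟨hkmem.1.le, hkmem.2⟩
    calc ‖∫ k in kminus..kplus, f2 k‖ ≤ |∫ k in kminus..kplus, C / k| := hbnd
      _ = C * Real.log (kplus / kminus) := by
          rw [hgv, abs_of_nonneg (mul_nonneg hC.le hlog)]
  calc ‖(∫ k in kminus..kplus, f1 k) + ∫ k in kminus..kplus, f2 k‖
      ≤ ‖∫ k in kminus..kplus, f1 k‖ + ‖∫ k in kminus..kplus, f2 k‖ := norm_add_le _ _
    _ ≤ 2 * ‖A‖ / |t - τ| + C * Real.log (kplus / kminus) := add_le_add hb1 hb2
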